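/- Let S⁻ = ∑_{j∈J⁻} Iⱼ and S⁺ = ∑_{j∈J⁺} Iⱼ be sums of independent Bernoulli random variables (J⁻, J⁺ disjoint finite index sets, Iⱼ ~ Be(rⱼ) with rⱼ ∈ [0,1]). Then E[(S⁻ − S⁺ − 1)₊] ≥ P(S⁻ = 0) − 1 + ∑_{j∈J⁻} rⱼ − ∑_{j∈J⁺} rⱼ, i.e., E[(S⁻ − S⁺ − 1)₊] ≥ ∏_{j∈J⁻}(1−rⱼ) − 1 + ∑_{j∈J⁻} rⱼ − ∑_{j∈J⁺} rⱼ. -/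

import Mathlib

open MeasureTheory ProbabilityTheory

theorem stmt_6 (Ω : Type*) [MeasurableSpace Ω] (μ : Measure Ω) [IsProbabilityMeasure μ]
    (ι : Type*) (Jm Jp : Finset ι) (hdisj : Disjoint Jm Jp)
    (r : ι → ℝ) (hr : ∀ j, 0 ≤ r j ∧ r j ≤ 1)
    (I : ι → Ω → ℕ) (hmeas : ∀ j, Measurable (I j))
    (hval : ∀ j ω, I j ω ≤ 1)
    (hdist : ∀ j, μ {ω | I j ω = 1} = ENNReal.ofReal (r j))
    (hind : iIndepFun I μ) :
    (∫ ω, max ((∑ j ∈ Jm, (I j ω : ℝ)) - (∑ j ∈ Jp, (I j ω : ℝ)) - 1) 0 ∂μ) ≥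
      (∏ j ∈ Jm, (1 - r j)) - 1 + (∑ j ∈ Jm, r j) - (∑ j ∈ Jp, r j) := by
  classical
  have hmeas1 : ∀ j, MeasurableSet {ω | I j ω = 1} :=
    fun j => hmeas j (measurableSet_singleton 1)
  have hImeasR : ∀ j, Measurable fun ω => (I j ω : ℝ) :=
    fun j => measurable_from_top.comp (hmeas j)
  have hInn : ∀ j ω, (0:ℝ) ≤ (I j ω : ℝ) := fun j ω => Nat.cast_nonneg _
  have hIle : ∀ j ω, (I j ω : ℝ) ≤ 1 := fun j ω => by exact_mod_cast hval j ω
  have hIint : ∀ j, Integrable (fun ω => (I j ω : ℝ)) μ := by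
    intro j
    refine (integrable_const (1:ℝ)).mono' (hImeasR j).aestronglyMeasurable
      (ae_of_all _ fun ω => ?_)
    rw [Real.norm_eq_abs, abs_of_nonneg (hInn j ω)]
    exact hIle j ω
  have hIval : ∀ j, (fun ω => (I j ω : ℝ))
      = Set.indicator {ω | I j ω = 1} (fun _ => (1:ℝ)) := by
    intro j
    funext ω
    by_cases h : I j ω = 1
    · simp [Set.indicator_apply, Set.mem_setOf_eq, h]
    · have h0 : I j ω = 0 := Nat.lt_one_iff.mp (lt_of_le_of_ne (hval j ω) h)
      simp [Set.indicator_apply, Set.mem_setOf_eq, h, h0]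
  have hIint' : ∀ j, ∫ ω, (I j ω : ℝ) ∂μ = r j := by
    intro j
    rw [hIval j, integral_indicator_const _ (hmeas1 j), measureReal_def, hdist j,
      ENNReal.toReal_ofReal (hr j).1, smul_eq_mul, mul_one]
  -- sums
  have hSm_meas : Measurable fun ω => ∑ j ∈ Jm, (I j ω : ℝ) :=
    Finset.measurable_sum _ fun j _ => hImeasR j
  have hSp_meas : Measurable fun ω => ∑ j ∈ Jp, (I j ω : ℝ) :=
    Finset.measurable_sum _ fun j _ => hImeasR j
  have hSmInt : Integrable (fun ω => ∑ j ∈ Jm, (I j ω : ℝ)) μ :=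
    integrable_finset_sum _ fun j _ => hIint j
  have hSpInt : Integrable (fun ω => ∑ j ∈ Jp, (I j ω : ℝ)) μ :=
    integrable_finset_sum _ fun j _ => hIint j
  have hSm_int : ∫ ω, (∑ j ∈ Jm, (I j ω : ℝ)) ∂μ = ∑ j ∈ Jm, r j := by
    rw [integral_finset_sum _ fun j _ => hIint j]
    exact Finset.sum_congr rfl fun j _ => hIint' j
  have hSp_int : ∫ ω, (∑ j ∈ Jp, (I j ω : ℝ)) ∂μ = ∑ j ∈ Jp, r j := by
    rw [integral_finset_sum _ fun j _ => hIint j]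
    exact Finset.sum_congr rfl fun j _ => hIint' j
  have hSm_nn : ∀ ω, (0:ℝ) ≤ ∑ j ∈ Jm, (I j ω : ℝ) :=
    fun ω => Finset.sum_nonneg fun j _ => hInn j ω
  have hSp_nn : ∀ ω, (0:ℝ) ≤ ∑ j ∈ Jp, (I j ω : ℝ) :=
    fun ω => Finset.sum_nonneg fun j _ => hInn j ω
  have hSm_bd : ∀ ω, (∑ j ∈ Jm, (I j ω : ℝ)) ≤ (Jm.card : ℝ) := by
    intro ω
    calc (∑ j ∈ Jm, (I j ω : ℝ)) ≤ ∑ _j ∈ Jm, (1:ℝ) :=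
          Finset.sum_le_sum fun j _ => hIle j ω
      _ = (Jm.card : ℝ) := by simp
  -- the event S⁻ = 0
  set A : Set Ω := ⋂ j ∈ Jm, I j ⁻¹' ({0} : Set ℕ) with hA_def
  have hA_meas : MeasurableSet A :=
    MeasurableSet.biInter Jm.countable_toSet fun j _ => hmeas j (measurableSet_singleton 0)
  have hA_mem : ∀ ω, ω ∈ A ↔ ∀ j ∈ Jm, I j ω = 0 := by
    intro ω
    simp [hA_def, Set.mem_iInter]
  have hmuA : μ A = ∏ j ∈ Jm, ENNReal.ofReal (1 - r j) := by
    have h := (iIndepFun_iff_measure_inter_preimage_eq_mul.mp hind) Jm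
      (sets := fun _ => ({0} : Set ℕ)) (fun i _ => measurableSet_singleton 0)
    rw [hA_def, h]
    refine Finset.prod_congr rfl fun j _ => ?_
    have hc : I j ⁻¹' ({0} : Set ℕ) = {ω | I j ω = 1}ᶜ := by
      ext ω
      simp only [Set.mem_preimage, Set.mem_singleton_iff, Set.mem_compl_iff, Set.mem_setOf_eq]
      constructor
      · intro h0; omega
      · intro h1
        have := hval j ω
        omega
    rw [hc, measure_compl (hmeas1 j) (measure_ne_top μ _), hdist j, measure_univ,
      ENNReal.ofReal_sub _ (hr j).1, ENNReal.ofReal_one]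
  have hmuA_toReal : (μ A).toReal = ∏ j ∈ Jm, (1 - r j) := by
    rw [hmuA, ENNReal.toReal_prod]
    exact Finset.prod_congr rfl fun j _ => ENNReal.toReal_ofReal (by linarith [(hr j).2])
  -- key pointwise identity: (Sm - 1)₊ = Sm - 1 + 1_A
  have hkey : ∀ ω, max ((∑ j ∈ Jm, (I j ω : ℝ)) - 1) 0
      = (∑ j ∈ Jm, (I j ω : ℝ)) - 1 + Set.indicator A (fun _ => (1:ℝ)) ω := by
    intro ω
    by_cases hA : ω ∈ A
    · have h0 : (∑ j ∈ Jm, (I j ω : ℝ)) = 0 :=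
        Finset.sum_eq_zero fun j hj => by simp [(hA_mem ω).mp hA j hj]
      rw [Set.indicator_of_mem hA, h0]
      norm_num
    · rw [Set.indicator_of_notMem hA]
      have h1 : (1:ℝ) ≤ ∑ j ∈ Jm, (I j ω : ℝ) := by
        obtain ⟨j, hj, hne⟩ : ∃ j ∈ Jm, I j ω ≠ 0 := by
          by_contra h
          push_neg at h
          exact hA ((hA_mem ω).mpr h)
        calc (1:ℝ) ≤ (I j ω : ℝ) := by exact_mod_cast Nat.one_le_iff_ne_zero.mpr hne
          _ ≤ ∑ j ∈ Jm, (I j ω : ℝ) := Finset.single_le_sum (fun i _ => hInn i ω) hj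
      rw [max_eq_left (by linarith), add_zero]
  -- pointwise inequality
  have hpt : ∀ ω, max ((∑ j ∈ Jm, (I j ω : ℝ)) - 1) 0 - (∑ j ∈ Jp, (I j ω : ℝ))
      ≤ max ((∑ j ∈ Jm, (I j ω : ℝ)) - (∑ j ∈ Jp, (I j ω : ℝ)) - 1) 0 := by
    intro ω
    rcases max_cases ((∑ j ∈ Jm, (I j ω : ℝ)) - 1) 0 with ⟨h1, _⟩ | ⟨h1, _⟩ <;> rw [h1]
    · exact le_trans (by linarith) (le_max_left _ _)
    · exact le_trans (by linarith [hSp_nn ω]) (le_max_right _ _)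
  -- integrability of RHS of goal's integrand
  have hf_int : Integrable
      (fun ω => max ((∑ j ∈ Jm, (I j ω : ℝ)) - (∑ j ∈ Jp, (I j ω : ℝ)) - 1) 0) μ := by
    refine (integrable_const ((Jm.card : ℝ))).mono'
      (((hSm_meas.sub hSp_meas).sub measurable_const).max measurable_const).aestronglyMeasurable
      (ae_of_all _ fun ω => ?_)
    rw [Real.norm_eq_abs, abs_of_nonneg (le_max_right _ _)]
    have h1 := hSm_bd ω
    have h2 := hSp_nn ω
    have h3 : (0:ℝ) ≤ (Jm.card : ℝ) := Nat.cast_nonneg _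
    rcases max_cases ((∑ j ∈ Jm, (I j ω : ℝ)) - (∑ j ∈ Jp, (I j ω : ℝ)) - 1) 0
      with ⟨h, _⟩ | ⟨h, _⟩ <;> rw [h] <;> linarith
  have hind_int : Integrable (Set.indicator A (fun _ => (1:ℝ))) μ := by
    rw [integrable_indicator_iff hA_meas]
    exact integrableOn_const (measure_ne_top μ A) (by simp)
  -- integrable g and its integral
  have hg_int : Integrable (fun ω => max ((∑ j ∈ Jm, (I j ω : ℝ)) - 1) 0
      - (∑ j ∈ Jp, (I j ω : ℝ))) μ := by
    have : (fun ω => max ((∑ j ∈ Jm, (I j ω : ℝ)) - 1) 0 - (∑ j ∈ Jp, (I j ω : ℝ)))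
        = fun ω => ((∑ j ∈ Jm, (I j ω : ℝ)) - 1 + Set.indicator A (fun _ => (1:ℝ)) ω)
            - (∑ j ∈ Jp, (I j ω : ℝ)) := by
      funext ω; rw [hkey ω]
    rw [this]
    exact (((hSmInt.sub (integrable_const 1)).add hind_int).sub hSpInt)
  have hg_val : ∫ ω, (max ((∑ j ∈ Jm, (I j ω : ℝ)) - 1) 0 - (∑ j ∈ Jp, (I j ω : ℝ))) ∂μ
      = (∏ j ∈ Jm, (1 - r j)) - 1 + (∑ j ∈ Jm, r j) - (∑ j ∈ Jp, r j) := by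
    have heq : (fun ω => max ((∑ j ∈ Jm, (I j ω : ℝ)) - 1) 0 - (∑ j ∈ Jp, (I j ω : ℝ)))
        = fun ω => ((∑ j ∈ Jm, (I j ω : ℝ)) - 1 + Set.indicator A (fun _ => (1:ℝ)) ω)
            - (∑ j ∈ Jp, (I j ω : ℝ)) := by
      funext ω; rw [hkey ω]
    have hY : Integrable (fun ω => (∑ j ∈ Jm, (I j ω : ℝ)) - 1) μ :=
      hSmInt.sub (integrable_const 1)
    have hX : Integrable (fun ω => (∑ j ∈ Jm, (I j ω : ℝ)) - 1
        + Set.indicator A (fun _ => (1:ℝ)) ω) μ := hY.add hind_int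
    rw [heq, integral_sub hX hSpInt,
      integral_add hY hind_int,
      integral_sub hSmInt (integrable_const 1), hSm_int, hSp_int,
      integral_indicator_const _ hA_meas, measureReal_def, hmuA_toReal]
    simp [measure_univ]
    ring
  calc (∏ j ∈ Jm, (1 - r j)) - 1 + (∑ j ∈ Jm, r j) - (∑ j ∈ Jp, r j)
      = ∫ ω, (max ((∑ j ∈ Jm, (I j ω : ℝ)) - 1) 0 - (∑ j ∈ Jp, (I j ω : ℝ))) ∂μ := hg_val.symm
    _ ≤ ∫ ω, max ((∑ j ∈ Jm, (I j ω : ℝ)) - (∑ j ∈ Jp, (I j ω : ℝ)) - 1) 0 ∂μ :=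
        integral_mono hg_int hf_int hpt
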